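/- Let D ⊆ F = F^× × [q_1, …, q_s] be a seminormal finitely primary monoid of rank s. If s ≥ 2, then min L(a) = 2 for every a ∈ D ∖ (D^× ∪ A(D)), and the catenary degree satisfies c(D) = 3. -/

import Mathlib

namespace ArXivSeminormal

attribute [local instance] Classical.propDecidable

noncomputable section

/-! ### Generic factorization theory in commutative monoids -/

variable {M : Type*} [CommMonoid M]

/-- The set of factorizations of `a` (in the sense of `Z(a)`): multisets of irreducible
elements of the reduced monoid (modelled by `Associates M`) whose product is the class
of `a`. -/
def Factorizations (a : M) : Set (Multiset (Associates M)) :=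
  {z | (∀ x ∈ z, Irreducible x) ∧ z.prod = Associates.mk a}

/-- The set of lengths `L(a)` of an element `a`. -/
def lengthSet (a : M) : Set ℕ :=
  {k | ∃ z ∈ Factorizations a, Multiset.card z = k}

/-- The set of (successive) distances `Δ(L)` of a set `L ⊆ ℕ`. -/
def DeltaSet (L : Set ℕ) : Set ℕ :=
  {d | ∃ k l, k ∈ L ∧ l ∈ L ∧ k < l ∧ (∀ m, k < m → m < l → m ∉ L) ∧ d = l - k}

/-- The set of distances `Δ(H)` of a monoid `H`. -/
def DeltaMonoid (M : Type*) [CommMonoid M] : Set ℕ :=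
  ⋃ a : M, DeltaSet (lengthSet a)

/-- The distance between two factorizations:
`d(z,z') = max (card (z - gcd z z')) (card (z' - gcd z z'))`. -/
def factorDist (z z' : Multiset (Associates M)) : ℕ :=
  max (Multiset.card (z - z')) (Multiset.card (z' - z))

/-- The catenary degree `c(H)` of a monoid `H`: the smallest `N ∈ ℕ∞` such that any two
factorizations of any element are connected by a chain of factorizations with consecutive
distances at most `N`. -/
def catenaryDegree (M : Type*) [CommMonoid M] : ℕ∞ :=
  sInf {N : ℕ∞ | ∀ (a : M), ∀ z ∈ Factorizations a, ∀ z' ∈ Factorizations a,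
    ∃ c : List (Multiset (Associates M)), c.head? = some z ∧ c.getLast? = some z' ∧
      (∀ w ∈ c, w ∈ Factorizations a) ∧
      List.Chain' (fun u v => (factorDist u v : ℕ∞) ≤ N) c}

/-- A monoid is factorial if every element has a unique factorization. -/
def IsFactorialMonoid (M : Type*) [CommMonoid M] : Prop :=
  ∀ a : M, ∃! z : Multiset (Associates M), z ∈ Factorizations a

/-! ### Free commutative monoids, block monoids, Davenport constant -/

/-- The free abelian (multiplicatively written) monoid on a set `P`. -/
abbrev FreeCM (P : Type*) := Multiplicative (Multiset P)

/-- The sum homomorphism `σ : F(G) → G`. -/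
def sigmaHom (G : Type*) [AddCommMonoid G] : FreeCM G →* Multiplicative G :=
  AddMonoidHom.toMultiplicative
    { toFun := Multiset.sum
      map_zero' := Multiset.sum_zero
      map_add' := Multiset.sum_add }

/-- The monoid of zero-sum sequences over `G`. -/
def BlockMonoid (G : Type*) [AddCommMonoid G] : Submonoid (FreeCM G) :=
  MonoidHom.mker (sigmaHom G)

/-- The Davenport constant of `G`: the supremum of lengths of minimal zero-sum sequences. -/
def Davenport (G : Type*) [AddCommMonoid G] : ℕ :=
  sSup {k | ∃ u : BlockMonoid G, Irreducible u ∧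
    Multiset.card (Multiplicative.toAdd (u : FreeCM G)) = k}

/-! ### Reduced seminormal finitely primary monoids -/

/-- The `Fin s →₀ ℕ` function with all values `1`, i.e. the exponent vector of
`q_1 ⋯ q_s`. -/
def allOnes (s : ℕ) : Fin s →₀ ℕ := Finsupp.equivFunOnFinite.symm fun _ => 1

/-- The reduced seminormal finitely primary monoid of rank `s` with unit group `U` of the
complete integral closure:
`D = {ε q_1^{k_1} ⋯ q_s^{k_s} : ε ∈ U, all k_j ≥ 1} ∪ {1} ⊆ U × [q_1,…,q_s]`. -/
def seminormalD (U : Type*) [CommGroup U] (s : ℕ) :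
    Submonoid (U × Multiplicative (Fin s →₀ ℕ)) where
  carrier := {x | x = 1 ∨ ∀ j, 1 ≤ Multiplicative.toAdd x.2 j}
  one_mem' := Or.inl rfl
  mul_mem' := by
    rintro a b (rfl | ha) (rfl | hb)
    · exact Or.inl (mul_one 1)
    · rw [Set.mem_setOf_eq, one_mul]; exact Or.inr hb
    · rw [Set.mem_setOf_eq, mul_one]; exact Or.inr ha
    · refine Or.inr fun j => ?_
      have h1 := ha j
      have h2 := hb j
      have h3 : Multiplicative.toAdd ((a * b).2) j
          = Multiplicative.toAdd a.2 j + Multiplicative.toAdd b.2 j := rfl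
      omega

/-! ### T-block monoids (Setting (S)) -/

/-- The monoid `T = D_1 × ⋯ × D_n`. -/
abbrev Tm {n : ℕ} (U : Fin n → Type*) [∀ i, CommGroup (U i)] (s : Fin n → ℕ) :=
  ∀ i, ↥(seminormalD (U i) (s i))

/-- The monoid `D̂_1 × ⋯ × D̂_n`. -/
abbrev HatTm {n : ℕ} (U : Fin n → Type*) [∀ i, CommGroup (U i)] (s : Fin n → ℕ) :=
  ∀ i, U i × Multiplicative (Fin (s i) →₀ ℕ)

/-- The monoid `F = F(G) × T`. -/
abbrev Fm (G : Type*) {n : ℕ} (U : Fin n → Type*) [∀ i, CommGroup (U i)] (s : Fin n → ℕ) :=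
  FreeCM G × Tm U s

/-- The homomorphism `F → G`, `S·t ↦ σ(S) + ι(t)`, whose kernel is the `T`-block monoid;
it computes the class `[a] ∈ G ≅ q(F)/q(B)` of `a ∈ F`. -/
def TBlockPhi (G : Type*) [AddCommGroup G] {n : ℕ} (U : Fin n → Type*) [∀ i, CommGroup (U i)]
    (s : Fin n → ℕ) (iota : Tm U s →* Multiplicative G) : Fm G U s →* Multiplicative G :=
  ((sigmaHom G).comp (MonoidHom.fst _ _)) * (iota.comp (MonoidHom.snd _ _))

/-- The `T`-block monoid `B = B(G, T, ι) = {S·t ∈ F(G) × T : σ(S) + ι(t) = 0}`. -/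
def TBlock (G : Type*) [AddCommGroup G] {n : ℕ} (U : Fin n → Type*) [∀ i, CommGroup (U i)]
    (s : Fin n → ℕ) (iota : Tm U s →* Multiplicative G) : Submonoid (Fm G U s) :=
  MonoidHom.mker (TBlockPhi G U s iota)

/-- The inclusion `T = D_1 × ⋯ × D_n → D̂_1 × ⋯ × D̂_n`. -/
def embedT {n : ℕ} (U : Fin n → Type*) [∀ i, CommGroup (U i)] (s : Fin n → ℕ) :
    Tm U s →* HatTm U s :=
  Pi.monoidHom fun i => (seminormalD (U i) (s i)).subtype.comp
    (Pi.evalMonoidHom (fun j => ↥(seminormalD (U j) (s j))) i)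

/-- The norm `‖A‖ = k + 2·Σ_i max L_{D_i}(a_i)` of `A = g_1⋯g_k a_1⋯a_n ∈ F`. -/
def normF (G : Type*) {n : ℕ} (U : Fin n → Type*) [∀ i, CommGroup (U i)] (s : Fin n → ℕ)
    (A : Fm G U s) : ℕ :=
  Multiset.card (Multiplicative.toAdd A.1) + 2 * ∑ i, sSup (lengthSet (A.2 i))

/-- The class `[ε] ∈ G` of a unit `ε ∈ D̂_ν^×`. -/
def classOfUnit {G : Type*} [AddCommGroup G] {n : ℕ} (U : Fin n → Type*)
    [∀ i, CommGroup (U i)] (s : Fin n → ℕ) (iotahat : HatTm U s →* Multiplicative G)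
    (ν : Fin n) (ε : U ν) : Multiplicative G :=
  iotahat (Pi.mulSingle ν (ε, 1))

/-- The class `[q_{ν,j}] ∈ G` of the prime `q_{ν,j}` of `D̂_ν`. -/
def classOfPrime {G : Type*} [AddCommGroup G] {n : ℕ} (U : Fin n → Type*)
    [∀ i, CommGroup (U i)] (s : Fin n → ℕ) (iotahat : HatTm U s →* Multiplicative G)
    (ν : Fin n) (j : Fin (s ν)) : Multiplicative G :=
  iotahat (Pi.mulSingle ν (1, Multiplicative.ofAdd (Finsupp.single j 1)))

/-- The quantity `d_ν ∈ {-1, 0, 1, 2}` from Theorem 3.3 (for `G = {0, e}` of order two). -/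
def dval {G : Type*} [AddCommGroup G] {n : ℕ} (U : Fin n → Type*) [∀ i, CommGroup (U i)]
    (s : Fin n → ℕ) (iotahat : HatTm U s →* Multiplicative G) (e : G) (ν : Fin n) : ℤ :=
  if (∀ ε : U ν, classOfUnit U s iotahat ν ε = 1) ∧ s ν = 2 ∧
      (Finset.univ.filter fun j : Fin (s ν) =>
        classOfPrime U s iotahat ν j = Multiplicative.ofAdd e).card = 2 then 2
  else if (∀ ε : U ν, classOfUnit U s iotahat ν ε = 1) ∧ s ν = 1 then 0
  else if (∀ ε : U ν, classOfUnit U s iotahat ν ε = 1) ∧ 2 ≤ s ν ∧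
      (Finset.univ.filter fun j : Fin (s ν) =>
        classOfPrime U s iotahat ν j = Multiplicative.ofAdd e).card = 0 then -1
  else 1

/-! ### Auxiliary generic lemmas -/

section AuxGeneric

variable {N : Type*} [CommMonoid N]

theorem aux_irr_mk {b : N} (h : Irreducible b) : Irreducible (Associates.mk b) := by
  constructor
  · rw [Associates.isUnit_mk]; exact h.not_isUnit
  · rintro x y hxy
    obtain ⟨x', rfl⟩ := Associates.mk_surjective x
    obtain ⟨y', rfl⟩ := Associates.mk_surjective y
    rw [Associates.mk_mul_mk, Associates.mk_eq_mk_iff_associated] at hxy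
    obtain ⟨u, hu⟩ := hxy
    have hb : b = x' * (y' * (u⁻¹ : Nˣ)) := by
      rw [← mul_assoc]
      exact ((Units.eq_mul_inv_iff_mul_eq u).mpr hu)
    rcases h.isUnit_or_isUnit hb with h1 | h2
    · left; rwa [Associates.isUnit_mk]
    · right
      rw [Associates.isUnit_mk]
      have : IsUnit ((y' * (u⁻¹ : Nˣ)) * (u : Nˣ)) := h2.mul u.isUnit
      simpa using this

theorem aux_exists_reps (z : Multiset (Associates N)) :
    ∃ z₀ : Multiset N, z₀.map Associates.mk = z := by
  induction z using Multiset.induction_on with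
  | empty => exact ⟨0, rfl⟩
  | cons t r ih =>
    obtain ⟨r₀, hr⟩ := ih
    obtain ⟨t₀, ht⟩ := Associates.mk_surjective t
    exact ⟨t₀ ::ₘ r₀, by rw [Multiset.map_cons, hr, ht]⟩

theorem aux_factz_unit {a : N} (ha : IsUnit a) {z} (hz : z ∈ Factorizations a) : z = 0 := by
  by_contra h
  obtain ⟨t, ht⟩ := Multiset.exists_mem_of_ne_zero h
  have hdvd : t ∣ z.prod := Multiset.dvd_prod ht
  rw [hz.2] at hdvd
  exact (hz.1 t ht).not_isUnit (isUnit_of_dvd_unit hdvd (by rwa [Associates.isUnit_mk]))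

theorem aux_factz_irr {a : N} (ha : Irreducible a) {z} (hz : z ∈ Factorizations a) :
    z = {Associates.mk a} := by
  have hmk := aux_irr_mk ha
  rcases Multiset.empty_or_exists_mem z with h0 | ⟨t, ht⟩
  · exfalso
    have : (1 : Associates N) = Associates.mk a := by
      rw [← hz.2, h0, Multiset.prod_zero]
    exact ha.not_isUnit (Associates.mk_eq_one.mp this.symm)
  · obtain ⟨r, rfl⟩ := Multiset.exists_cons_of_mem ht
    rcases Multiset.empty_or_exists_mem r with h0 | ⟨u, hu⟩
    · subst h0
      have : t = Associates.mk a := by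
        rw [← hz.2]; simp
      rw [this]; rfl
    · exfalso
      have hprod : Associates.mk a = t * r.prod := by rw [← hz.2, Multiset.prod_cons]
      rcases hmk.isUnit_or_isUnit hprod with h1 | h2
      · exact (hz.1 t (Multiset.mem_cons_self t r)).not_isUnit h1
      · have hdvd : u ∣ r.prod := Multiset.dvd_prod hu
        exact (hz.1 u (Multiset.mem_cons_of_mem hu)).not_isUnit (isUnit_of_dvd_unit hdvd h2)

theorem aux_factorDist_comm (z z' : Multiset (Associates N)) :
    factorDist z z' = factorDist z' z := max_comm _ _

theorem aux_card_le_sum {m : Multiset ℕ} (h : ∀ n ∈ m, 1 ≤ n) : Multiset.card m ≤ m.sum := by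
  induction m using Multiset.induction_on with
  | empty => simp
  | cons a t ih =>
    simp only [Multiset.card_cons, Multiset.sum_cons]
    have h1 := h a (Multiset.mem_cons_self a t)
    have h2 := ih (fun n hn => h n (Multiset.mem_cons_of_mem hn))
    omega

theorem aux_exists_adj {X : Type*} (R : X → X → Prop) (f : X → ℕ) :
    ∀ c : List X, List.Chain' R c → (∀ w ∈ c, f w = 2 ∨ f w = 3) →
    ∀ z z', c.head? = some z → c.getLast? = some z' → f z = 3 → f z' = 2 →
    ∃ u ∈ c, ∃ v ∈ c, R u v ∧ f u = 3 ∧ f v = 2 := by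
  intro c
  induction c with
  | nil => intro _ _ z z' h; simp at h
  | cons x rest ih =>
    intro hch hall z z' hh hl h3 h2
    have hx : x = z := by simpa using hh
    subst hx
    cases rest with
    | nil =>
      exfalso
      have : x = z' := by simpa using hl
      subst this
      omega
    | cons y rest' =>
      by_cases hy : f y = 2
      · exact ⟨x, List.mem_cons_self, y, List.mem_cons_of_mem _ List.mem_cons_self,
          (List.isChain_cons_cons.mp hch).1, h3, hy⟩
      · have hy3 : f y = 3 := ((hall y (by simp)).resolve_left hy)
        obtain ⟨u, hu, v, hv, hruv⟩ := ih (List.isChain_cons_cons.mp hch).2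
          (fun w hw => hall w (List.mem_cons_of_mem _ hw)) y z' rfl
          (by rw [← hl]; exact List.getLast?_cons_cons.symm) hy3 h2
        exact ⟨u, List.mem_cons_of_mem _ hu, v, List.mem_cons_of_mem _ hv, hruv⟩

theorem aux_irr_of_mk {b : N} (h : Irreducible (Associates.mk b)) : Irreducible b := by
  constructor
  · intro hu; exact h.not_isUnit (by rwa [Associates.isUnit_mk])
  · intro p q hpq
    rcases h.isUnit_or_isUnit (show Associates.mk b = Associates.mk p * Associates.mk q by
        rw [hpq, Associates.mk_mul_mk]) with h1 | h1
    · left; rwa [Associates.isUnit_mk] at h1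
    · right; rwa [Associates.isUnit_mk] at h1

theorem aux_pair_factz {a b c : N} (hb : Irreducible b) (hc : Irreducible c)
    (hbc : b * c = a) :
    ({Associates.mk b, Associates.mk c} : Multiset (Associates N)) ∈ Factorizations a := by
  constructor
  · intro x hx
    rcases Multiset.mem_cons.mp hx with rfl | hx
    · exact aux_irr_mk hb
    · rw [Multiset.mem_singleton] at hx; subst hx; exact aux_irr_mk hc
  · show (Associates.mk b ::ₘ {Associates.mk c}).prod = _
    rw [Multiset.prod_cons, Multiset.prod_singleton, Associates.mk_mul_mk, hbc]

theorem aux_triple_factz {a b c d : N} (hb : Irreducible b) (hc : Irreducible c)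
    (hd : Irreducible d) (h : b * (c * d) = a) :
    ({Associates.mk b, Associates.mk c, Associates.mk d} : Multiset (Associates N)) ∈
      Factorizations a := by
  constructor
  · intro x hx
    rcases Multiset.mem_cons.mp hx with rfl | hx
    · exact aux_irr_mk hb
    rcases Multiset.mem_cons.mp hx with rfl | hx
    · exact aux_irr_mk hc
    · rw [Multiset.mem_singleton] at hx; subst hx; exact aux_irr_mk hd
  · show (Associates.mk b ::ₘ Associates.mk c ::ₘ {Associates.mk d}).prod = _
    rw [Multiset.prod_cons, Multiset.prod_cons, Multiset.prod_singleton,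
      Associates.mk_mul_mk, Associates.mk_mul_mk, h]

theorem aux_two_le_card {a b c : N} (hb : Irreducible b) (hc : Irreducible c)
    (hbc : b * c = a) {z} (hz : z ∈ Factorizations a) : 2 ≤ Multiset.card z := by
  by_contra hlt
  push_neg at hlt
  interval_cases h : Multiset.card z
  · rw [Multiset.card_eq_zero] at h
    subst h
    have h1 : (1 : Associates N) = Associates.mk a := by rw [← hz.2, Multiset.prod_zero]
    have : IsUnit a := Associates.mk_eq_one.mp h1.symm
    rw [← hbc] at this
    exact hb.not_isUnit (isUnit_of_dvd_unit ⟨c, rfl⟩ this)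
  · rw [Multiset.card_eq_one] at h
    obtain ⟨t, rfl⟩ := h
    have ht : t = Associates.mk a := by rw [← hz.2, Multiset.prod_singleton]
    have hirr : Irreducible (Associates.mk a) := ht ▸ hz.1 t (Multiset.mem_singleton_self t)
    rcases hirr.isUnit_or_isUnit (show Associates.mk a = Associates.mk b * Associates.mk c by
        rw [Associates.mk_mul_mk, hbc]) with h1 | h1
    · exact hb.not_isUnit (by rwa [Associates.isUnit_mk] at h1)
    · exact hc.not_isUnit (by rwa [Associates.isUnit_mk] at h1)

end AuxGeneric

/-! ### Lemmas about the seminormal monoid D -/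

section DSpec

variable {U : Type*} [CommGroup U] {s : ℕ} {D : Submonoid (U × Multiplicative (Fin s →₀ ℕ))}

/-- The `j`-th exponent of an element of `D`. -/
def coordD (x : ↥D) (j : Fin s) : ℕ :=
  Multiplicative.toAdd (x : U × Multiplicative (Fin s →₀ ℕ)).2 j

theorem coordD_mul (x y : ↥D) (j : Fin s) :
    coordD (x * y) j = coordD x j + coordD y j := by
  show Multiplicative.toAdd ((x : U × Multiplicative (Fin s →₀ ℕ)) * y).2 j = _
  rw [Prod.snd_mul, toAdd_mul, Finsupp.add_apply]
  rfl

theorem coordD_one (j : Fin s) : coordD (1 : ↥D) j = 0 := rfl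

theorem coordD_unit {x : ↥D} (hx : IsUnit x) (j : Fin s) : coordD x j = 0 := by
  obtain ⟨u, rfl⟩ := hx
  have h1 : ((u : ↥D) * ((u⁻¹ : (↥D)ˣ) : ↥D)) = 1 := u.mul_inv
  have h2 := congrArg (fun y => coordD y j) h1
  simp only [coordD_mul, coordD_one] at h2
  omega

theorem not_isUnit_of_coordD {x : ↥D} {j : Fin s} (h : 1 ≤ coordD x j) : ¬ IsUnit x :=
  fun hu => by simp [coordD_unit hu j] at h

section WithPrimary

variable (hprimary : ∀ x : D, ¬ IsUnit x →
      ∀ j, 1 ≤ Multiplicative.toAdd (x : U × Multiplicative (Fin s →₀ ℕ)).2 j)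

include hprimary

theorem coordD_pos {x : ↥D} (hx : ¬ IsUnit x) (j : Fin s) : 1 ≤ coordD x j :=
  hprimary x hx j

theorem irr_of_coordD {x : ↥D} (h1 : ∀ j, 1 ≤ coordD x j) {j₀ : Fin s}
    (hj : coordD x j₀ = 1) : Irreducible x := by
  refine ⟨not_isUnit_of_coordD (h1 j₀), ?_⟩
  intro b c hbc
  have hm : coordD b j₀ + coordD c j₀ = 1 := by rw [← coordD_mul, ← hbc, hj]
  by_contra hcon
  push_neg at hcon
  have hb := hprimary b hcon.1 j₀
  have hc := hprimary c hcon.2 j₀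
  exact absurd hm (by change 1 ≤ coordD b j₀ at hb; change 1 ≤ coordD c j₀ at hc; omega)

variable (hseminormal : (D : Set (U × Multiplicative (Fin s →₀ ℕ))) =
      {x : U × Multiplicative (Fin s →₀ ℕ) | ∀ j, 1 ≤ Multiplicative.toAdd x.2 j} ∪
        {x : U × Multiplicative (Fin s →₀ ℕ) | ∃ h : x ∈ D, IsUnit (⟨x, h⟩ : D)})

include hseminormal

set_option linter.unusedSectionVars false
set_option linter.unusedVariables false

omit hprimary in
theorem mem_of_coords {x : U × Multiplicative (Fin s →₀ ℕ)}
    (hx : ∀ j, 1 ≤ Multiplicative.toAdd x.2 j) : x ∈ D := by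
  have : x ∈ (D : Set (U × Multiplicative (Fin s →₀ ℕ))) := by
    rw [hseminormal]; exact Or.inl hx
  exact this

/-- The splitting lemma: an element all of whose exponents are `≥ 2` is a product of
two atoms. -/
theorem splitD (hs : 2 ≤ s) {x : ↥D} (h2 : ∀ j, 2 ≤ coordD x j) :
    ∃ b c : ↥D, Irreducible b ∧ Irreducible c ∧ b * c = x := by
  set j0 : Fin s := ⟨0, by omega⟩ with hj0
  set j1 : Fin s := ⟨1, by omega⟩ with hj1
  set f : Fin s →₀ ℕ := Multiplicative.toAdd (x : U × Multiplicative (Fin s →₀ ℕ)).2 with hf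
  have hfj : ∀ j, 2 ≤ f j := h2
  set g : Fin s →₀ ℕ := Finsupp.equivFunOnFinite.symm (fun j => if j = j0 then f j - 1 else 1)
    with hg
  set h : Fin s →₀ ℕ := Finsupp.equivFunOnFinite.symm (fun j => if j = j0 then 1 else f j - 1)
    with hh
  have hgapp : ∀ j, g j = if j = j0 then f j - 1 else 1 := fun j =>
    congrFun (Finsupp.coe_equivFunOnFinite_symm _) j
  have hhapp : ∀ j, h j = if j = j0 then 1 else f j - 1 := fun j =>
    congrFun (Finsupp.coe_equivFunOnFinite_symm _) j
  have hg1 : ∀ j, 1 ≤ g j := by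
    intro j; rw [hgapp]; split
    · have := hfj j; omega
    · omega
  have hh1 : ∀ j, 1 ≤ h j := by
    intro j; rw [hhapp]; split
    · omega
    · have := hfj j; omega
  refine ⟨⟨((x : U × Multiplicative (Fin s →₀ ℕ)).1, Multiplicative.ofAdd g),
      mem_of_coords hseminormal (by intro j; simpa using hg1 j)⟩,
    ⟨(1, Multiplicative.ofAdd h),
      mem_of_coords hseminormal (by intro j; simpa using hh1 j)⟩, ?_, ?_, ?_⟩
  · refine irr_of_coordD hprimary (fun j => ?_) (j₀ := j1) ?_
    · show 1 ≤ g j; exact hg1 j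
    · show g j1 = 1
      rw [hgapp]
      have : j1 ≠ j0 := by rw [hj0, hj1]; simp [Fin.ext_iff]
      simp [this]
  · refine irr_of_coordD hprimary (fun j => ?_) (j₀ := j0) ?_
    · show 1 ≤ h j; exact hh1 j
    · show h j0 = 1
      rw [hhapp]; simp
  · apply Subtype.ext
    show ((x : U × Multiplicative (Fin s →₀ ℕ)).1, Multiplicative.ofAdd g) *
      (1, Multiplicative.ofAdd h) = (x : U × Multiplicative (Fin s →₀ ℕ))
    have hsnd : Multiplicative.ofAdd g * Multiplicative.ofAdd h
        = (x : U × Multiplicative (Fin s →₀ ℕ)).2 := by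
      rw [← ofAdd_add]
      have : g + h = f := by
        ext j
        rw [Finsupp.add_apply, hgapp, hhapp]
        have := hfj j
        split <;> omega
      rw [this, hf]
      simp
    ext
    · simp
    · rw [← hsnd]; rfl

theorem coords2_of_not_irr (hs : 2 ≤ s) {x : ↥D} (hnu : ¬ IsUnit x) (hni : ¬ Irreducible x)
    (j : Fin s) : 2 ≤ coordD x j := by
  have h1 : ∀ j', 1 ≤ coordD x j' := fun j' => hprimary x hnu j'
  by_contra hlt
  have hone : coordD x j = 1 := by have := h1 j; omega
  exact hni (irr_of_coordD hprimary h1 hone)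

theorem irr_coord_one (hs : 2 ≤ s) {x : ↥D} (hx : Irreducible x) :
    ∃ j, coordD x j = 1 := by
  by_contra hcon
  push_neg at hcon
  have h2 : ∀ j, 2 ≤ coordD x j := by
    intro j
    have h1 : 1 ≤ coordD x j := hprimary x hx.not_isUnit j
    have := hcon j
    omega
  obtain ⟨b, c, hb, hc, hbc⟩ := splitD hprimary hseminormal hs h2
  rcases hx.isUnit_or_isUnit hbc.symm with h | h
  · exact hb.not_isUnit h
  · exact hc.not_isUnit h

end WithPrimary

theorem cancelD {x y z : ↥D} (h : x * y = x * z) : y = z := by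
  have hM : (x : U × Multiplicative (Fin s →₀ ℕ)) * y = (x : U × Multiplicative (Fin s →₀ ℕ)) * z :=
    congrArg Subtype.val h
  exact Subtype.ext (mul_left_cancel hM)

theorem coordD_prod (j : Fin s) (m : Multiset ↥D) :
    coordD m.prod j = (m.map (fun x => coordD x j)).sum := by
  induction m using Multiset.induction_on with
  | empty => simp [coordD_one]
  | cons a t ih => simp [Multiset.prod_cons, coordD_mul, ih]

end DSpec
/-! ### The chain lemma and disjointness -/

section ChainSec

set_option linter.unusedSectionVars false
set_option linter.unusedVariables false

variable {U : Type*} [CommGroup U] {s : ℕ} {D : Submonoid (U × Multiplicative (Fin s →₀ ℕ))}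
variable (hprimary : ∀ x : D, ¬ IsUnit x →
      ∀ j, 1 ≤ Multiplicative.toAdd (x : U × Multiplicative (Fin s →₀ ℕ)).2 j)
variable (hseminormal : (D : Set (U × Multiplicative (Fin s →₀ ℕ))) =
      {x : U × Multiplicative (Fin s →₀ ℕ) | ∀ j, 1 ≤ Multiplicative.toAdd x.2 j} ∪
        {x : U × Multiplicative (Fin s →₀ ℕ) | ∃ h : x ∈ D, IsUnit (⟨x, h⟩ : D)})

include hprimary hseminormal

theorem chain_to_pair (hs : 2 ≤ s) {a b c : ↥D} (hb : Irreducible b) (hc : Irreducible c)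
    (hbc : b * c = a) :
    ∀ k z, z ∈ Factorizations a → Multiset.card z = k →
    ∃ ch : List (Multiset (Associates ↥D)), ch.head? = some z ∧
      ch.getLast? = some ({Associates.mk b, Associates.mk c} : Multiset (Associates ↥D)) ∧
      (∀ w ∈ ch, w ∈ Factorizations a) ∧
      List.Chain' (fun u v => (factorDist u v : ℕ∞) ≤ 3) ch := by
  have hz₀ := aux_pair_factz hb hc hbc
  intro k
  induction k using Nat.strong_induction_on with
  | _ k ih =>
    intro z hz hcard
    have h2le := aux_two_le_card hb hc hbc hz
    rcases Nat.lt_or_ge k 3 with h3 | h3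
    · -- card z = 2 : direct hop to the canonical pair
      have hd : factorDist z ({Associates.mk b, Associates.mk c} : Multiset (Associates ↥D))
          ≤ 3 := by
        apply max_le
        · calc Multiset.card (z - _) ≤ Multiset.card z := Multiset.card_le_card tsub_le_self
            _ ≤ 3 := by omega
        · calc Multiset.card (_ - z)
              ≤ Multiset.card ({Associates.mk b, Associates.mk c} : Multiset (Associates ↥D)) :=
                Multiset.card_le_card tsub_le_self
            _ ≤ 3 := by simp
      refine ⟨[z, {Associates.mk b, Associates.mk c}], rfl, by simp, ?_, ?_⟩
      · intro w hw
        rcases List.mem_cons.mp hw with rfl | hw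
        · exact hz
        · rcases List.mem_cons.mp hw with rfl | hw
          · exact hz₀
          · simp at hw
      · refine List.isChain_cons_cons.mpr ⟨?_, List.isChain_singleton _⟩
        exact_mod_cast hd
    · -- card z ≥ 3 : replace three atoms by two
      obtain ⟨t1, ht1⟩ := Multiset.exists_mem_of_ne_zero
        (show z ≠ 0 by intro h; rw [h] at hcard; simp at hcard; omega)
      obtain ⟨w1, rfl⟩ := Multiset.exists_cons_of_mem ht1
      have hcw1 : Multiset.card w1 = k - 1 := by
        rw [Multiset.card_cons] at hcard; omega
      obtain ⟨t2, ht2⟩ := Multiset.exists_mem_of_ne_zero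
        (show w1 ≠ 0 by intro h; rw [h] at hcw1; simp at hcw1; omega)
      obtain ⟨w2, rfl⟩ := Multiset.exists_cons_of_mem ht2
      have hcw2 : Multiset.card w2 = k - 2 := by
        rw [Multiset.card_cons] at hcw1; omega
      obtain ⟨t3, ht3⟩ := Multiset.exists_mem_of_ne_zero
        (show w2 ≠ 0 by intro h; rw [h] at hcw2; simp at hcw2; omega)
      obtain ⟨w, rfl⟩ := Multiset.exists_cons_of_mem ht3
      have hcw : Multiset.card w = k - 3 := by
        rw [Multiset.card_cons] at hcw2; omega
      obtain ⟨x1, rfl⟩ := Associates.mk_surjective t1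
      obtain ⟨x2, rfl⟩ := Associates.mk_surjective t2
      obtain ⟨x3, rfl⟩ := Associates.mk_surjective t3
      have hi1 : Irreducible x1 := aux_irr_of_mk (hz.1 _ (Multiset.mem_cons_self _ _))
      have hi2 : Irreducible x2 := aux_irr_of_mk (hz.1 _
        (Multiset.mem_cons_of_mem (Multiset.mem_cons_self _ _)))
      have hi3 : Irreducible x3 := aux_irr_of_mk (hz.1 _
        (Multiset.mem_cons_of_mem (Multiset.mem_cons_of_mem (Multiset.mem_cons_self _ _))))
      have hP : ∀ j, 2 ≤ coordD (x1 * (x2 * x3)) j := by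
        intro j
        have h1 := coordD_pos hprimary hi1.not_isUnit j
        have h2 := coordD_pos hprimary hi2.not_isUnit j
        have h3 := coordD_pos hprimary hi3.not_isUnit j
        rw [coordD_mul, coordD_mul]
        omega
      obtain ⟨b', c', hb', hc', hb'c'⟩ := splitD hprimary hseminormal hs hP
      set z'' : Multiset (Associates ↥D) := Associates.mk b' ::ₘ Associates.mk c' ::ₘ w
        with hz''def
      have hz'' : z'' ∈ Factorizations a := by
        constructor
        · intro x hx
          rcases Multiset.mem_cons.mp hx with rfl | hx
          · exact aux_irr_mk hb'
          rcases Multiset.mem_cons.mp hx with rfl | hx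
          · exact aux_irr_mk hc'
          · exact hz.1 _ (Multiset.mem_cons_of_mem (Multiset.mem_cons_of_mem
              (Multiset.mem_cons_of_mem hx)))
        · have hzp := hz.2
          simp only [Multiset.prod_cons] at hzp
          show (Associates.mk b' ::ₘ Associates.mk c' ::ₘ w).prod = Associates.mk a
          simp only [Multiset.prod_cons]
          have hbceq : Associates.mk b' * Associates.mk c'
              = Associates.mk x1 * (Associates.mk x2 * Associates.mk x3) := by
            rw [Associates.mk_mul_mk, Associates.mk_mul_mk, Associates.mk_mul_mk, hb'c']
          calc Associates.mk b' * (Associates.mk c' * w.prod)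
              = (Associates.mk b' * Associates.mk c') * w.prod := (mul_assoc _ _ _).symm
            _ = (Associates.mk x1 * (Associates.mk x2 * Associates.mk x3)) * w.prod := by
                rw [hbceq]
            _ = Associates.mk x1 * (Associates.mk x2 * (Associates.mk x3 * w.prod)) := by
                rw [mul_assoc, mul_assoc]
            _ = Associates.mk a := hzp
      have hwz'' : w ≤ z'' :=
        le_trans (Multiset.le_cons_self w _) (Multiset.le_cons_self _ _)
      have hwz : w ≤ Associates.mk x1 ::ₘ Associates.mk x2 ::ₘ Associates.mk x3 ::ₘ w :=
        le_trans (Multiset.le_cons_self w _)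
          (le_trans (Multiset.le_cons_self _ _) (Multiset.le_cons_self _ _))
      have hzeq : (Associates.mk x1 ::ₘ Associates.mk x2 ::ₘ Associates.mk x3 ::ₘ w)
          = ({Associates.mk x1, Associates.mk x2, Associates.mk x3} :
              Multiset (Associates ↥D)) + w := by
        rw [Multiset.insert_eq_cons, Multiset.insert_eq_cons, Multiset.cons_add,
          Multiset.cons_add, Multiset.singleton_add]
      have hz''eq : z'' = ({Associates.mk b', Associates.mk c'} :
          Multiset (Associates ↥D)) + w := by
        rw [hz''def, Multiset.insert_eq_cons, Multiset.cons_add, Multiset.singleton_add]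
      have hdist : factorDist (Associates.mk x1 ::ₘ Associates.mk x2 ::ₘ
          Associates.mk x3 ::ₘ w) z'' ≤ 3 := by
        apply max_le
        · have hle : (Associates.mk x1 ::ₘ Associates.mk x2 ::ₘ Associates.mk x3 ::ₘ w) - z''
              ≤ ({Associates.mk x1, Associates.mk x2, Associates.mk x3} :
                Multiset (Associates ↥D)) := by
            calc (Associates.mk x1 ::ₘ Associates.mk x2 ::ₘ Associates.mk x3 ::ₘ w) - z''
                ≤ (Associates.mk x1 ::ₘ Associates.mk x2 ::ₘ Associates.mk x3 ::ₘ w) - w :=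
                  tsub_le_tsub_left hwz'' _
              _ = _ := by rw [hzeq, add_tsub_cancel_right]
          calc Multiset.card _ ≤ Multiset.card ({Associates.mk x1, Associates.mk x2,
              Associates.mk x3} : Multiset (Associates ↥D)) := Multiset.card_le_card hle
            _ ≤ 3 := by simp
        · have hle : z'' - (Associates.mk x1 ::ₘ Associates.mk x2 ::ₘ Associates.mk x3 ::ₘ w)
              ≤ ({Associates.mk b', Associates.mk c'} : Multiset (Associates ↥D)) := by
            calc z'' - (Associates.mk x1 ::ₘ Associates.mk x2 ::ₘ Associates.mk x3 ::ₘ w)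
                ≤ z'' - w := tsub_le_tsub_left hwz _
              _ = _ := by rw [hz''eq, add_tsub_cancel_right]
          calc Multiset.card _ ≤ Multiset.card ({Associates.mk b', Associates.mk c'} :
              Multiset (Associates ↥D)) := Multiset.card_le_card hle
            _ ≤ 3 := by simp
      have hcz'' : Multiset.card z'' = k - 1 := by
        rw [hz''def, Multiset.card_cons, Multiset.card_cons]; omega
      obtain ⟨ch, hh, hl, hmem, hchain⟩ := ih (k - 1) (by omega) z'' hz'' hcz''
      cases ch with
      | nil => simp at hh
      | cons c0 cht =>
        have hc0 : c0 = z'' := by simpa using hh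
        subst hc0
        refine ⟨(Associates.mk x1 ::ₘ Associates.mk x2 ::ₘ Associates.mk x3 ::ₘ w) ::
          z'' :: cht, rfl, ?_, ?_, ?_⟩
        · rw [List.getLast?_cons_cons]; exact hl
        · intro v hv
          rcases List.mem_cons.mp hv with rfl | hv
          · exact hz
          · exact hmem v hv
        · exact List.isChain_cons_cons.mpr ⟨by exact_mod_cast hdist, hchain⟩

theorem no_common (hs : 2 ≤ s) {a : ↥D} {u v : Multiset (Associates ↥D)}
    (hu : u ∈ Factorizations a) (hv : v ∈ Factorizations a)
    (hcu : Multiset.card u = 3) (hcv : Multiset.card v = 2) {t : Associates ↥D}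
    (htu : t ∈ u) (htv : t ∈ v) : False := by
  have hit := hu.1 t htu
  obtain ⟨u1, rfl⟩ := Multiset.exists_cons_of_mem htu
  obtain ⟨v1, rfl⟩ := Multiset.exists_cons_of_mem htv
  rw [Multiset.card_cons] at hcu hcv
  obtain ⟨p, q, rfl⟩ := Multiset.card_eq_two.mp (show Multiset.card u1 = 2 by omega)
  obtain ⟨y, rfl⟩ := Multiset.card_eq_one.mp (show Multiset.card v1 = 1 by omega)
  have hip : Irreducible p := hu.1 p (Multiset.mem_cons_of_mem (Multiset.mem_cons_self _ _))
  have hiq : Irreducible q := hu.1 q (Multiset.mem_cons_of_mem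
    (Multiset.mem_cons_of_mem (Multiset.mem_singleton_self _)))
  have hiy : Irreducible y := hv.1 y (Multiset.mem_cons_of_mem (Multiset.mem_singleton_self _))
  obtain ⟨t0, rfl⟩ := Associates.mk_surjective t
  obtain ⟨p0, rfl⟩ := Associates.mk_surjective p
  obtain ⟨q0, rfl⟩ := Associates.mk_surjective q
  obtain ⟨y0, rfl⟩ := Associates.mk_surjective y
  have hup : Associates.mk (t0 * (p0 * q0)) = Associates.mk a := by
    rw [← hu.2]
    show _ = (Associates.mk t0 ::ₘ Associates.mk p0 ::ₘ {Associates.mk q0}).prod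
    rw [Multiset.prod_cons, Multiset.prod_cons, Multiset.prod_singleton,
      ← Associates.mk_mul_mk, ← Associates.mk_mul_mk]
  have hvp : Associates.mk (t0 * y0) = Associates.mk a := by
    rw [← hv.2]
    show _ = (Associates.mk t0 ::ₘ {Associates.mk y0}).prod
    rw [Multiset.prod_cons, Multiset.prod_singleton, ← Associates.mk_mul_mk]
  have heq : Associates.mk (t0 * (p0 * q0)) = Associates.mk (t0 * y0) := by rw [hup, hvp]
  obtain ⟨ε, hε⟩ := Associates.mk_eq_mk_iff_associated.mp heq
  have hcancel : (p0 * q0) * (ε : ↥D) = y0 := by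
    apply cancelD (x := t0)
    rw [← mul_assoc, hε]
  obtain ⟨j, hj⟩ := irr_coord_one hprimary hseminormal hs (aux_irr_of_mk hiy)
  have h1 := coordD_pos hprimary (aux_irr_of_mk hip).not_isUnit j
  have h2 := coordD_pos hprimary (aux_irr_of_mk hiq).not_isUnit j
  have h3 := coordD_unit (ε : (↥D)ˣ).isUnit j
  have := congrArg (fun x => coordD x j) hcancel
  simp only [coordD_mul] at this
  rw [hj, h3] at this
  omega

omit hseminormal in
theorem card_le_three (hs : 2 ≤ s) {a : ↥D} (ha : ∀ j, coordD a j = 3)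
    {z : Multiset (Associates ↥D)} (hz : z ∈ Factorizations a) : Multiset.card z ≤ 3 := by
  obtain ⟨z₀, rfl⟩ := aux_exists_reps z
  have hp : Associates.mk z₀.prod = Associates.mk a := by
    rw [← Associates.prod_mk]; exact hz.2
  obtain ⟨ε, hε⟩ := Associates.mk_eq_mk_iff_associated.mp hp
  set j0 : Fin s := ⟨0, by omega⟩ with hj0
  have h3 : coordD (z₀.prod * (ε : ↥D)) j0 = 3 := by rw [hε]; exact ha j0
  rw [coordD_mul, coordD_unit (ε : (↥D)ˣ).isUnit] at h3
  have hsum := coordD_prod j0 z₀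
  have hcard : Multiset.card z₀ ≤ (z₀.map (fun x => coordD x j0)).sum := by
    rw [← Multiset.card_map (fun x => coordD x j0) z₀]
    apply aux_card_le_sum
    intro n hn
    obtain ⟨x, hx, rfl⟩ := Multiset.mem_map.mp hn
    have hirr := hz.1 (Associates.mk x) (Multiset.mem_map_of_mem _ hx)
    exact coordD_pos hprimary (aux_irr_of_mk hirr).not_isUnit j0
  rw [Multiset.card_map]
  omega

end ChainSec
/-- Lemma 2.1(3): in a seminormal finitely primary monoid of rank `s ≥ 2`, every
non-unit non-atom has minimal factorization length `2`; in particular the catenary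
degree equals `3`. -/
theorem rank_ge_two_seminormal_finitely_primary
    {U : Type*} [CommGroup U] {s : ℕ} (hs : 2 ≤ s)
    (D : Submonoid (U × Multiplicative (Fin s →₀ ℕ)))
    (hprimary : ∀ x : D, ¬ IsUnit x →
      ∀ j, 1 ≤ Multiplicative.toAdd (x : U × Multiplicative (Fin s →₀ ℕ)).2 j)
    (hconductor : ∃ α : ℕ, 1 ≤ α ∧ ∀ y : U × Multiplicative (Fin s →₀ ℕ),
      ((1 : U), Multiplicative.ofAdd (allOnes s)) ^ α * y ∈ D)
    (hseminormal : (D : Set (U × Multiplicative (Fin s →₀ ℕ))) =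
      {x : U × Multiplicative (Fin s →₀ ℕ) | ∀ j, 1 ≤ Multiplicative.toAdd x.2 j} ∪
        {x : U × Multiplicative (Fin s →₀ ℕ) | ∃ h : x ∈ D, IsUnit (⟨x, h⟩ : D)}) :
    (∀ a : D, ¬ IsUnit a → ¬ Irreducible a → sInf (lengthSet a) = 2) ∧
      catenaryDegree ↥D = 3 := by
  have hDfac : ∀ {a b c : ↥D}, Irreducible b → Irreducible c → b * c = a →
      ({Associates.mk b, Associates.mk c} : Multiset (Associates ↥D)) ∈ Factorizations a :=
    fun hb hc hbc => aux_pair_factz hb hc hbc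
  constructor
  · -- minimal length is 2
    intro a hnu hni
    have h2 : ∀ j, 2 ≤ coordD a j := coords2_of_not_irr hprimary hseminormal hs hnu hni
    obtain ⟨b, c, hb, hc, hbc⟩ := splitD hprimary hseminormal hs h2
    have hz₀ := aux_pair_factz hb hc hbc
    apply le_antisymm
    · exact Nat.sInf_le ⟨{Associates.mk b, Associates.mk c}, hz₀, by simp⟩
    · refine le_csInf ⟨2, {Associates.mk b, Associates.mk c}, hz₀, by simp⟩ ?_
      rintro m ⟨z, hzf, rfl⟩
      exact aux_two_le_card hb hc hbc hzf
  · -- the catenary degree is 3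
    apply le_antisymm
    · -- c(D) ≤ 3
      apply sInf_le
      intro a z hz z' hz'
      by_cases hu : IsUnit a
      · have h1 : z = 0 := aux_factz_unit hu hz
        have h2 : z' = 0 := aux_factz_unit hu hz'
        refine ⟨[z], rfl, ?_, ?_, List.isChain_singleton _⟩
        · rw [h1, h2]; simp
        · intro w hw
          rcases List.mem_cons.mp hw with rfl | hw
          · exact hz
          · simp at hw
      by_cases hi : Irreducible a
      · have h1 : z = {Associates.mk a} := aux_factz_irr hi hz
        have h2 : z' = {Associates.mk a} := aux_factz_irr hi hz'
        refine ⟨[z], rfl, ?_, ?_, List.isChain_singleton _⟩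
        · rw [h1, h2]; simp
        · intro w hw
          rcases List.mem_cons.mp hw with rfl | hw
          · exact hz
          · simp at hw
      · have h2 : ∀ j, 2 ≤ coordD a j := coords2_of_not_irr hprimary hseminormal hs hu hi
        obtain ⟨b, c, hb, hc, hbc⟩ := splitD hprimary hseminormal hs h2
        obtain ⟨ch1, hh1, hl1, hm1, hc1⟩ :=
          chain_to_pair hprimary hseminormal hs hb hc hbc (Multiset.card z) z hz rfl
        obtain ⟨ch2, hh2, hl2, hm2, hc2⟩ :=
          chain_to_pair hprimary hseminormal hs hb hc hbc (Multiset.card z') z' hz' rfl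
        cases ch1 with
        | nil => simp at hh1
        | cons c0 r1 =>
          have hc0 : c0 = z := by simpa using hh1
          subst hc0
          refine ⟨(c0 :: r1) ++ ch2.reverse, ?_, ?_, ?_, ?_⟩
          · rfl
          · rw [List.getLast?_append, List.getLast?_reverse, hh2]; rfl
          · intro w hw
            rcases List.mem_append.mp hw with hw | hw
            · exact hm1 w hw
            · exact hm2 w (List.mem_reverse.mp hw)
          · refine List.IsChain.append hc1 ?_ ?_
            · rw [List.isChain_reverse]
              refine hc2.imp ?_
              intro p q hpq
              show (factorDist q p : ℕ∞) ≤ 3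
              rwa [aux_factorDist_comm]
            · intro x hx y hy
              rw [hl1] at hx
              rw [List.head?_reverse, hl2] at hy
              have hx' : x = {Associates.mk b, Associates.mk c} := by simpa using hx.symm
              have hy' : y = {Associates.mk b, Associates.mk c} := by simpa using hy.symm
              subst hx'; subst hy'
              show (factorDist _ _ : ℕ∞) ≤ 3
              simp [factorDist]
    · -- c(D) ≥ 3
      apply le_sInf
      intro N hN
      have hmem1 : ((1 : U), Multiplicative.ofAdd (allOnes s)) ∈ D := by
        apply mem_of_coords hseminormal
        intro j
        show 1 ≤ allOnes s j
        rw [allOnes, Finsupp.coe_equivFunOnFinite_symm]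
      set t : ↥D := ⟨((1 : U), Multiplicative.ofAdd (allOnes s)), hmem1⟩ with htdef
      have hct : ∀ j, coordD t j = 1 := by
        intro j
        show allOnes s j = 1
        rw [allOnes, Finsupp.coe_equivFunOnFinite_symm]
      have hit : Irreducible t :=
        irr_of_coordD hprimary (fun j => le_of_eq (hct j).symm) (hct ⟨0, by omega⟩)
      set a : ↥D := t * (t * t) with hadef
      have hca : ∀ j, coordD a j = 3 := by
        intro j
        rw [hadef, coordD_mul, coordD_mul, hct]
      have h2a : ∀ j, 2 ≤ coordD a j := fun j => by rw [hca]; omega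
      obtain ⟨b, c, hb, hc, hbc⟩ := splitD hprimary hseminormal hs h2a
      have hz : ({Associates.mk t, Associates.mk t, Associates.mk t} :
          Multiset (Associates ↥D)) ∈ Factorizations a := aux_triple_factz hit hit hit rfl
      have hz' := aux_pair_factz hb hc hbc
      obtain ⟨ch, hh, hl, hmem, hchain⟩ := hN a _ hz _ hz'
      have hcards : ∀ w ∈ ch, Multiset.card w = 2 ∨ Multiset.card w = 3 := by
        intro w hw
        have hwf := hmem w hw
        have hle := card_le_three hprimary hs hca hwf
        have hge := aux_two_le_card hb hc hbc hwf
        omega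
      obtain ⟨u, hu, v, hv, hruv, hcu, hcv⟩ := aux_exists_adj
        (fun u v => (factorDist u v : ℕ∞) ≤ N) Multiset.card ch hchain hcards _ _ hh hl
        (by simp) (by simp)
      have hdisj : u ∩ v = 0 := by
        by_contra hne
        obtain ⟨t', ht'⟩ := Multiset.exists_mem_of_ne_zero hne
        exact no_common hprimary hseminormal hs (hmem u hu) (hmem v hv) hcu hcv
          (Multiset.mem_inter.mp ht').1 (Multiset.mem_inter.mp ht').2
      have huv : u - v = u := by
        rw [← Multiset.sub_inter, hdisj, tsub_zero]
      have h3 : 3 ≤ factorDist u v := by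
        have : 3 ≤ Multiset.card (u - v) := by rw [huv]; omega
        exact le_trans this (le_max_left _ _)
      calc (3 : ℕ∞) = ((3 : ℕ) : ℕ∞) := by norm_cast
        _ ≤ (factorDist u v : ℕ∞) := by exact_mod_cast h3
        _ ≤ N := hruv

end
end ArXivSeminormal
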